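/- Every vertex-transitive graph G with at least one vertex satisfies χ_f(G) = |V(G)| / α(G). -/

import Mathlib

open SimpleGraph

/-- A graph is vertex-transitive if its automorphism group acts transitively
on the vertices. -/
def VertexTransitive {V : Type*} (G : SimpleGraph V) : Prop :=
  ∀ u v : V, ∃ e : G ≃g G, e u = v

/-- The independence number of `G`: the clique number of the complement. -/
noncomputable def indepNum {V : Type*} (G : SimpleGraph V) : ℕ := Gᶜ.cliqueNum

/-- The fractional chromatic number of a finite graph `G`: the infimum of `a / b`
over all `b`-fold colorings of `G` with `a` colors (each vertex gets a set of `b`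
colors out of `a`, adjacent vertices receiving disjoint sets). -/
noncomputable def fracChromaticNumber {V : Type*} [Fintype V] (G : SimpleGraph V) : ℝ :=
  sInf {q : ℝ | ∃ a b : ℕ, 0 < b ∧ q = (a : ℝ) / (b : ℝ) ∧
    ∃ c : V → Finset (Fin a), (∀ v, (c v).card = b) ∧
      ∀ u v, G.Adj u v → Disjoint (c u) (c v)}

open Finset
noncomputable instance {V : Type*} [Fintype V] {G : SimpleGraph V} : Fintype (G ≃g G) := by
  classical
  exact Fintype.ofInjective RelIso.toEquiv RelIso.toEquiv_injective

lemma sum_card_eq {V : Type*} [Fintype V] {a : ℕ} (c : V → Finset (Fin a)) :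
    ∑ v, (c v).card = ∑ i : Fin a, (univ.filter fun v => i ∈ c v).card := by
  classical
  simp only [Finset.card_filter]
  rw [Finset.sum_comm]
  congr 1
  ext v
  rw [← Finset.card_filter]
  simp

lemma indep_card_le {V : Type*} [Fintype V] {G : SimpleGraph V} (t : Finset V)
    (h : ∀ u ∈ t, ∀ v ∈ t, G.Adj u v → False) : t.card ≤ _root_.indepNum G := by
  classical
  have hc : Gᶜ.IsClique (t : Set V) := by
    intro u hu v hv huv
    refine ⟨huv, fun hadj => h u hu v hv hadj⟩
  exact IsClique.card_le_cliqueNum (tc := hc)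

lemma indepNum_pos {V : Type*} [Fintype V] [Nonempty V] (G : SimpleGraph V) : 0 < _root_.indepNum G := by
  classical
  obtain ⟨v⟩ := ‹Nonempty V›
  have : ({v} : Finset V).card ≤ _root_.indepNum G :=
    indep_card_le _ (by simp)
  simpa [Nat.one_le_iff_ne_zero, Nat.pos_iff_ne_zero] using this

/-- Every vertex-transitive graph satisfies `χ_f(G) = |V(G)| / α(G)`. -/
theorem transitive_fracChromaticNumber_eq {V : Type*} [Fintype V] [Nonempty V]
    (G : SimpleGraph V) (hvt : VertexTransitive G) :
    fracChromaticNumber G = (Fintype.card V : ℝ) / (_root_.indepNum G : ℝ) := by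
  classical
  set n := Fintype.card V with hn
  set α := _root_.indepNum G with hal
  have hα0 : 0 < α := indepNum_pos G
  have hn0 : 0 < n := Fintype.card_pos
  obtain ⟨S, hS⟩ := (Gᶜ).exists_isNClique_cliqueNum
  have hScard : S.card = α := hS.card_eq
  have hSindep : ∀ u ∈ S, ∀ v ∈ S, G.Adj u v → False := by
    intro u hu v hv hadj
    exact (hS.isClique hu hv hadj.ne).2 hadj
  -- the construction
  set a := Fintype.card (G ≃g G) with ha
  set eqv : (G ≃g G) ≃ Fin a := Fintype.equivFin (G ≃g G) with heqv
  set c : V → Finset (Fin a) := fun v => univ.filter (fun i => (eqv.symm i) v ∈ S) with hc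
  -- card is constant
  have hcardN : ∀ u v : V,
      Fintype.card {g : G ≃g G // g u ∈ S} = Fintype.card {g : G ≃g G // g v ∈ S} := by
    intro u v
    obtain ⟨h, hh⟩ := hvt v u
    let e' : (G ≃g G) ≃ (G ≃g G) :=
      { toFun := fun g => h.trans g
        invFun := fun g => h.symm.trans g
        left_inv := by
          intro g; apply RelIso.ext; intro x
          simp [RelIso.trans_apply]
        right_inv := by
          intro g; apply RelIso.ext; intro x
          simp [RelIso.trans_apply] }
    refine Fintype.card_congr (Equiv.subtypeEquiv e' ?_)
    intro g
    show g u ∈ S ↔ (h.trans g) v ∈ S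
    rw [RelIso.trans_apply, hh]
  set b := Fintype.card {g : G ≃g G // g (Classical.arbitrary V) ∈ S} with hbdef
  have hcb : ∀ v, (c v).card = b := by
    intro v
    rw [hc]
    rw [← Fintype.card_subtype]
    refine Eq.trans ?_ (hcardN v (Classical.arbitrary V))
    exact Fintype.card_congr (Equiv.subtypeEquiv eqv.symm fun i => Iff.rfl)
  have hb0 : 0 < b := by
    rw [hbdef, Fintype.card_pos_iff]
    have hSne : S.Nonempty := Finset.card_pos.mp (hScard ▸ hα0)
    obtain ⟨s, hs⟩ := hSne
    obtain ⟨g, hg⟩ := hvt (Classical.arbitrary V) s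
    exact ⟨⟨g, hg ▸ hs⟩⟩
  -- each color class of the constructed coloring has exactly α vertices
  have hclass : ∀ i : Fin a, (univ.filter fun v => i ∈ c v).card = α := by
    intro i
    have : (univ.filter fun v => i ∈ c v) = S.image (eqv.symm i).symm := by
      ext w
      simp only [hc, Finset.mem_filter, Finset.mem_univ, true_and, Finset.mem_image]
      constructor
      · intro hw
        exact ⟨(eqv.symm i) w, hw, by simp⟩
      · rintro ⟨s, hs, rfl⟩
        simpa using hs
    rw [this, Finset.card_image_of_injective _ (RelIso.injective _), hScard]
  -- the key counting identity for the construction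
  have hkey : n * b = a * α := by
    have h1 : ∑ v : V, (c v).card = n * b := by
      rw [Finset.sum_congr rfl (fun v _ => hcb v)]
      simp [hn, mul_comm]
    have h2 : ∑ v : V, (c v).card = a * α := by
      rw [sum_card_eq c, Finset.sum_congr rfl (fun i _ => hclass i)]
      simp [ha, mul_comm]
    omega
  -- disjointness of the construction
  have hdisj : ∀ u v, G.Adj u v → Disjoint (c u) (c v) := by
    intro u v hadj
    rw [Finset.disjoint_left]
    intro i hiu hiv
    rw [hc, Finset.mem_filter] at hiu hiv
    have hne : (eqv.symm i) u ≠ (eqv.symm i) v := fun h => hadj.ne (RelIso.injective _ h)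
    have := (hS.isClique hiu.2 hiv.2 hne).2
    exact this (((eqv.symm i)).map_rel_iff.mpr hadj)
  have hmem : ((n : ℝ) / (α : ℝ)) ∈ {q : ℝ | ∃ a b : ℕ, 0 < b ∧ q = (a : ℝ) / (b : ℝ) ∧
      ∃ c : V → Finset (Fin a), (∀ v, (c v).card = b) ∧
        ∀ u v, G.Adj u v → Disjoint (c u) (c v)} := by
    refine ⟨a, b, hb0, ?_, c, hcb, hdisj⟩
    rw [div_eq_div_iff (by exact_mod_cast hα0.ne' : (α:ℝ) ≠ 0) (by exact_mod_cast hb0.ne' : (b:ℝ) ≠ 0)]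
    exact_mod_cast hkey
  -- lower bound
  have hlb : ∀ q ∈ {q : ℝ | ∃ a b : ℕ, 0 < b ∧ q = (a : ℝ) / (b : ℝ) ∧
      ∃ c : V → Finset (Fin a), (∀ v, (c v).card = b) ∧
        ∀ u v, G.Adj u v → Disjoint (c u) (c v)}, ((n : ℝ) / (α : ℝ)) ≤ q := by
    rintro q ⟨a', b', hb', rfl, c', hc', hd'⟩
    rw [div_le_div_iff₀ (by exact_mod_cast hα0) (by exact_mod_cast hb')]
    have hnb : n * b' ≤ a' * α := by
      have h1 : ∑ v : V, (c' v).card = n * b' := by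
        rw [Finset.sum_congr rfl (fun v _ => hc' v)]
        simp [hn, mul_comm]
      have h2 : ∑ i : Fin a', (univ.filter fun v => i ∈ c' v).card ≤ a' * α := by
        calc ∑ i : Fin a', (univ.filter fun v => i ∈ c' v).card
            ≤ ∑ _i : Fin a', α := by
              refine Finset.sum_le_sum fun i _ => ?_
              refine indep_card_le _ fun u hu v hv hadj => ?_
              rw [Finset.mem_filter] at hu hv
              exact (Finset.disjoint_left.mp (hd' u v hadj) hu.2) hv.2
          _ = a' * α := by simp [mul_comm]
      rw [← h1, sum_card_eq c']
      exact h2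
    exact_mod_cast hnb
  refine le_antisymm (csInf_le ?_ hmem) (le_csInf ⟨_, hmem⟩ hlb)
  refine ⟨0, ?_⟩
  rintro q ⟨a', b', hb', rfl, -⟩
  positivity
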